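/- Let t > −1 and k > 0 and c > 0 be real numbers, and let f : [0, ∞) → [0, ∞) be a measurable integrable function (a probability density, ∫_0^∞ f(α) dα = 1) such that f(α) = c·α^t + o(α^t) as α → 0⁺ (i.e., lim_{α→0⁺} f(α)/α^t = c). Define P_e(s) = ∫_0^∞ Q(√(k·α·s))·f(α) dα for s > 0. Then, as s → ∞, P_e(s) = (2^t·c·Γ(t + 3/2)/(√π·(t+1)))·(k·s)^{−(t+1)} + o(s^{−(t+1)}); equivalently, lim_{s→∞} s^{t+1}·P_e(s) = 2^t·c·Γ(t + 3/2) / ( √π·(t+1)·k^{t+1} ). (Paper's Theorem 1: the diversity gain of the scalar channel is t + 1.) -/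

import Mathlib

open MeasureTheory Set Filter Real
open intervalIntegral in
theorem Stmt13Aux.integral_rpow' {a b r : ℝ} (h : -1 < r) :
    ∫ x in a..b, x ^ r = (b ^ (r + 1) - a ^ (r + 1)) / (r + 1) := integral_rpow (Or.inl h)
open intervalIntegral in
theorem Stmt13Aux.integrableOn_Ioo_rpow' {s t : ℝ} (ht : 0 < t) (h : -1 < s) :
    IntegrableOn (fun x => x ^ s) (Ioo 0 t) volume := (integrableOn_Ioo_rpow_iff ht).mpr h

/-- The Gaussian Q-function `Q(x) = ∫_x^∞ (1/√(2π))·e^{−s²/2} ds`. -/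
noncomputable def Qfun (x : ℝ) : ℝ :=
  ∫ s in Set.Ioi x, (1 / Real.sqrt (2 * Real.pi)) * Real.exp (-s ^ 2 / 2)

namespace Stmt13Aux

noncomputable def phi (x : ℝ) : ℝ := (1 / Real.sqrt (2 * Real.pi)) * Real.exp (-x ^ 2 / 2)

lemma phi_nonneg (x : ℝ) : 0 ≤ phi x := by
  have h : (0:ℝ) < Real.sqrt (2 * Real.pi) := Real.sqrt_pos.mpr (by positivity)
  unfold phi; positivity

lemma phi_meas : Measurable phi := by unfold phi; fun_prop

lemma phi_integrable : Integrable phi := by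
  have h := (integrable_exp_neg_mul_sq (by norm_num : (0:ℝ) < 1/2)).const_mul
    (1 / Real.sqrt (2 * Real.pi))
  refine h.congr (Eventually.of_forall fun x => ?_)
  unfold phi
  simp only
  rw [show -(1/2:ℝ)*x^2 = -x^2/2 by ring]

lemma Qfun_eq (x : ℝ) : Qfun x = ∫ s in Set.Ioi x, phi s := rfl

lemma Qfun_nonneg (x : ℝ) : 0 ≤ Qfun x := by
  rw [Qfun_eq]
  exact setIntegral_nonneg measurableSet_Ioi fun y _ => phi_nonneg y

lemma Qfun_antitone : Antitone Qfun := by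
  intro a b hab
  rw [Qfun_eq, Qfun_eq]
  exact setIntegral_mono_set phi_integrable.integrableOn
    (Eventually.of_forall fun y => phi_nonneg y)
    (HasSubset.Subset.eventuallyLE (Ioi_subset_Ioi hab))

lemma Qfun_meas : Measurable Qfun := Qfun_antitone.measurable

lemma ofReal_Qfun (x : ℝ) :
    ENNReal.ofReal (Qfun x) = ∫⁻ s in Set.Ioi x, ENNReal.ofReal (phi s) := by
  rw [Qfun_eq]
  exact ofReal_integral_eq_lintegral_ofReal phi_integrable.integrableOn
    (Eventually.of_forall fun y => phi_nonneg y)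

end Stmt13Aux

namespace Stmt13Aux

noncomputable def G (f : ℝ → ℝ) (b : ℝ) : ℝ := ∫ α in Ioo 0 b, f α

lemma G_mono {f : ℝ → ℝ} (hnonneg : ∀ α, 0 ≤ f α) (hInt : IntegrableOn f (Ioi 0)) :
    Monotone (G f) := by
  intro a b hab
  exact setIntegral_mono_set (hInt.mono_set Ioo_subset_Ioi_self)
    (Eventually.of_forall fun y => hnonneg y)
    (HasSubset.Subset.eventuallyLE (Ioo_subset_Ioo_right hab))

lemma G_nonneg {f : ℝ → ℝ} (hnonneg : ∀ α, 0 ≤ f α) (b : ℝ) : 0 ≤ G f b :=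
  setIntegral_nonneg measurableSet_Ioo fun α _ => hnonneg α

lemma G_le_one {f : ℝ → ℝ} (hnonneg : ∀ α, 0 ≤ f α) (hInt : IntegrableOn f (Ioi 0))
    (hprob : ∫ α in Ioi (0:ℝ), f α = 1) (b : ℝ) : G f b ≤ 1 := by
  rw [← hprob]
  exact setIntegral_mono_set hInt (Eventually.of_forall fun y => hnonneg y)
    (HasSubset.Subset.eventuallyLE Ioo_subset_Ioi_self)

lemma cdf_tendsto (t c : ℝ) (ht : -1 < t) (f : ℝ → ℝ)
    (hInt : IntegrableOn f (Ioi 0))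
    (hf : Tendsto (fun α => f α / α ^ t) (nhdsWithin 0 (Ioi 0)) (nhds c)) :
    Tendsto (fun b => G f b / b ^ (t+1)) (nhdsWithin 0 (Ioi 0)) (nhds (c/(t+1))) := by
  have ht1 : 0 < t + 1 := by linarith
  rw [Metric.tendsto_nhdsWithin_nhds] at hf ⊢
  intro ε hε
  obtain ⟨δ, hδ0, hδ'⟩ := hf (ε * (t+1) / 2) (by positivity)
  refine ⟨δ, hδ0, fun b hb hbδ => ?_⟩
  have hb0 : (0:ℝ) < b := hb
  have hbpow : (0:ℝ) < b ^ (t+1) := Real.rpow_pos_of_pos hb0 _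
  have hrint : IntegrableOn (fun α => α ^ t) (Ioo (0:ℝ) b) :=
    integrableOn_Ioo_rpow' hb0 ht
  have hfint : IntegrableOn f (Ioo (0:ℝ) b) := hInt.mono_set Ioo_subset_Ioi_self
  have hval : ∫ α in Ioo (0:ℝ) b, α ^ t = b ^ (t+1) / (t+1) := by
    rw [← integral_Ioc_eq_integral_Ioo, ← intervalIntegral.integral_of_le hb0.le]
    rw [integral_rpow' ht, Real.zero_rpow (by linarith : t + 1 ≠ 0)]
    ring
  have hbd : ∀ α ∈ Ioo (0:ℝ) b, |f α - c * α ^ t| ≤ (ε * (t+1)/2) * α ^ t := by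
    intro α hα
    have hα0 : 0 < α := hα.1
    have hαδ : dist α 0 < δ := by
      rw [Real.dist_eq, sub_zero, abs_of_pos hα0]
      calc α < b := hα.2
        _ < δ := by rwa [Real.dist_eq, sub_zero, abs_of_pos hb0] at hbδ
    have h1 := hδ' hα0 hαδ
    rw [Real.dist_eq] at h1
    have hαt : 0 < α ^ t := Real.rpow_pos_of_pos hα0 _
    have h2 : f α - c * α ^ t = (f α / α ^ t - c) * α ^ t := by
      field_simp
    rw [h2, abs_mul, abs_of_pos hαt]
    nlinarith [abs_nonneg (f α / α ^ t - c)]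
  have hdiff : ∫ α in Ioo (0:ℝ) b, (f α - c * α ^ t) = G f b - c * (b ^ (t+1)/(t+1)) := by
    rw [integral_sub hfint (hrint.const_mul c), integral_const_mul, hval]
    rfl
  have hnorm : |G f b - c * (b^(t+1)/(t+1))| ≤ (ε*(t+1)/2) * (b^(t+1)/(t+1)) := by
    rw [← hdiff]
    calc |∫ α in Ioo (0:ℝ) b, (f α - c * α ^ t)|
        ≤ ∫ α in Ioo (0:ℝ) b, |f α - c * α ^ t| := by
          simpa [Real.norm_eq_abs] using
            norm_integral_le_integral_norm (μ := volume.restrict (Ioo 0 b))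
              (f := fun α => f α - c * α ^ t)
      _ ≤ ∫ α in Ioo (0:ℝ) b, (ε*(t+1)/2) * α ^ t := by
          refine setIntegral_mono_on ((hfint.sub (hrint.const_mul c)).abs) ?_
            measurableSet_Ioo hbd
          exact hrint.const_mul _
      _ = (ε*(t+1)/2) * (b^(t+1)/(t+1)) := by rw [integral_const_mul, hval]
  rw [Real.dist_eq]
  have h3 : G f b / b^(t+1) - c/(t+1) = (G f b - c * (b^(t+1)/(t+1))) / b^(t+1) := by
    field_simp
  rw [h3, abs_div, abs_of_pos hbpow, div_lt_iff₀ hbpow]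
  calc |G f b - c*(b^(t+1)/(t+1))| ≤ (ε*(t+1)/2) * (b^(t+1)/(t+1)) := hnorm
    _ = (ε/2) * b^(t+1) := by field_simp
    _ < ε * b^(t+1) := by nlinarith

end Stmt13Aux

namespace Stmt13Aux

lemma fubini (k s : ℝ) (hk : 0 < k) (hs : 0 < s)
    (f : ℝ → ℝ) (hmeas : Measurable f) (hnonneg : ∀ α, 0 ≤ f α)
    (hInt : IntegrableOn f (Ioi 0)) :
    ∫ α in Ioi (0:ℝ), Qfun (Real.sqrt (k * α * s)) * f α
      = ∫ x in Ioi (0:ℝ), phi x * G f (x ^ 2 / (k * s)) := by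
  have hks : 0 < k * s := mul_pos hk hs
  set S : Set (ℝ × ℝ) := {p | 0 < p.1 ∧ Real.sqrt (k * p.1 * s) < p.2} with hSdef
  have hsqm : Measurable fun p : ℝ × ℝ => Real.sqrt (k * p.1 * s) := by fun_prop
  have hSm : MeasurableSet S := by
    have h1 : MeasurableSet {p : ℝ × ℝ | 0 < p.1} :=
      measurableSet_lt measurable_const measurable_fst
    have h2 : MeasurableSet {p : ℝ × ℝ | Real.sqrt (k * p.1 * s) < p.2} :=
      measurableSet_lt hsqm measurable_snd
    exact h1.inter h2
  set H : ℝ × ℝ → ENNReal :=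
    S.indicator (fun p => ENNReal.ofReal (phi p.2) * ENNReal.ofReal (f p.1)) with hHdef
  have hHm : Measurable H :=
    (((phi_meas.comp measurable_snd).ennreal_ofReal).mul
      ((hmeas.comp measurable_fst).ennreal_ofReal)).indicator hSm
  have hGmono : Monotone (G f) := G_mono hnonneg hInt
  -- Step A
  have hA : ∫⁻ α, ∫⁻ x, H (α, x) = ∫⁻ α in Ioi (0:ℝ),
      ENNReal.ofReal (Qfun (Real.sqrt (k * α * s)) * f α) := by
    rw [← lintegral_indicator measurableSet_Ioi]
    refine lintegral_congr fun α => ?_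
    by_cases hα : α ∈ Ioi (0:ℝ)
    · rw [indicator_of_mem hα]
      have hset : ∀ x, H (α, x) = (Ioi (Real.sqrt (k * α * s))).indicator
          (fun x => ENNReal.ofReal (phi x) * ENNReal.ofReal (f α)) x := by
        intro x
        by_cases hx : Real.sqrt (k * α * s) < x
        · rw [hHdef, indicator_of_mem (show (α, x) ∈ S from ⟨hα, hx⟩),
            indicator_of_mem (show x ∈ Ioi _ from hx)]
        · rw [hHdef, indicator_of_notMem (fun hmem => hx hmem.2),
            indicator_of_notMem (show x ∉ Ioi (Real.sqrt (k * α * s)) from hx)]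
      calc ∫⁻ x, H (α, x)
          = ∫⁻ x in Ioi (Real.sqrt (k * α * s)),
              ENNReal.ofReal (phi x) * ENNReal.ofReal (f α) := by
            rw [lintegral_congr hset, lintegral_indicator measurableSet_Ioi]
        _ = (∫⁻ x in Ioi (Real.sqrt (k * α * s)), ENNReal.ofReal (phi x))
              * ENNReal.ofReal (f α) := by
            rw [lintegral_mul_const'' _ phi_meas.ennreal_ofReal.aemeasurable]
        _ = ENNReal.ofReal (Qfun (Real.sqrt (k * α * s)) * f α) := by
            rw [← ofReal_Qfun, ← ENNReal.ofReal_mul (Qfun_nonneg _)]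
    · rw [indicator_of_notMem hα]
      have hzero : ∀ x : ℝ, H (α, x) = 0 := fun x =>
        indicator_of_notMem (fun hmem => hα (hmem.1 : (0:ℝ) < α)) _
      rw [lintegral_congr hzero, lintegral_zero]
  -- Step B
  have hB : ∫⁻ x, ∫⁻ α, H (α, x) = ∫⁻ x in Ioi (0:ℝ),
      ENNReal.ofReal (phi x * G f (x ^ 2 / (k * s))) := by
    rw [← lintegral_indicator measurableSet_Ioi]
    refine lintegral_congr fun x => ?_
    by_cases hx : x ∈ Ioi (0:ℝ)
    · rw [indicator_of_mem hx]
      have hxpos : (0:ℝ) < x := hx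
      have hiff : ∀ α, (α, x) ∈ S ↔ α ∈ Ioo 0 (x ^ 2 / (k * s)) := by
        intro α
        simp only [hSdef, mem_setOf_eq, mem_Ioo]
        constructor
        · rintro ⟨h1, h2⟩
          refine ⟨h1, ?_⟩
          rw [Real.sqrt_lt' hxpos] at h2
          rw [lt_div_iff₀ hks]
          nlinarith
        · rintro ⟨h1, h2⟩
          refine ⟨h1, ?_⟩
          rw [Real.sqrt_lt' hxpos]
          rw [lt_div_iff₀ hks] at h2
          nlinarith
      have hset : ∀ α, H (α, x) = (Ioo (0:ℝ) (x ^ 2 / (k * s))).indicator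
          (fun α => ENNReal.ofReal (phi x) * ENNReal.ofReal (f α)) α := by
        intro α
        by_cases hα : (α, x) ∈ S
        · rw [hHdef, indicator_of_mem hα, indicator_of_mem ((hiff α).mp hα)]
        · rw [hHdef, indicator_of_notMem hα,
            indicator_of_notMem (fun hmem => hα ((hiff α).mpr hmem))]
      calc ∫⁻ α, H (α, x)
          = ∫⁻ α in Ioo (0:ℝ) (x ^ 2 / (k * s)),
              ENNReal.ofReal (phi x) * ENNReal.ofReal (f α) := by
            rw [lintegral_congr hset, lintegral_indicator measurableSet_Ioo]
        _ = ENNReal.ofReal (phi x)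
              * ∫⁻ α in Ioo (0:ℝ) (x ^ 2 / (k * s)), ENNReal.ofReal (f α) := by
            rw [lintegral_const_mul'' _ hmeas.ennreal_ofReal.aemeasurable]
        _ = ENNReal.ofReal (phi x * G f (x ^ 2 / (k * s))) := by
            rw [← ofReal_integral_eq_lintegral_ofReal
              (hInt.mono_set Ioo_subset_Ioi_self)
              (Eventually.of_forall fun y => hnonneg y),
              ← ENNReal.ofReal_mul (phi_nonneg x)]
            rfl
    · rw [indicator_of_notMem hx]
      have hx0 : x ≤ 0 := not_lt.mp hx
      have hzero : ∀ α : ℝ, H (α, x) = 0 := by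
        intro α
        refine indicator_of_notMem (fun hmem => ?_) _
        exact absurd (lt_of_le_of_lt (Real.sqrt_nonneg _) hmem.2)
          (not_lt.mpr hx0)
      rw [lintegral_congr hzero, lintegral_zero]
  -- swap
  have hswap : ∫⁻ α, ∫⁻ x, H (α, x) = ∫⁻ x, ∫⁻ α, H (α, x) :=
    lintegral_lintegral_swap (f := fun α x => H (α, x))
      (by exact hHm.aemeasurable)
  -- convert to Bochner integrals
  have h1 : ∫ α in Ioi (0:ℝ), Qfun (Real.sqrt (k * α * s)) * f α
      = (∫⁻ α in Ioi (0:ℝ),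
          ENNReal.ofReal (Qfun (Real.sqrt (k * α * s)) * f α)).toReal := by
    refine integral_eq_lintegral_of_nonneg_ae
      (Eventually.of_forall fun α => mul_nonneg (Qfun_nonneg _) (hnonneg α)) ?_
    exact ((Qfun_meas.comp (by fun_prop)).mul hmeas).aestronglyMeasurable
  have h2 : ∫ x in Ioi (0:ℝ), phi x * G f (x ^ 2 / (k * s))
      = (∫⁻ x in Ioi (0:ℝ),
          ENNReal.ofReal (phi x * G f (x ^ 2 / (k * s)))).toReal := by
    refine integral_eq_lintegral_of_nonneg_ae
      (Eventually.of_forall fun x => mul_nonneg (phi_nonneg x) (G_nonneg hnonneg _)) ?_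
    exact (phi_meas.mul (hGmono.measurable.comp (by fun_prop))).aestronglyMeasurable
  rw [h1, h2, ← hA, ← hB, hswap]

end Stmt13Aux

open Stmt13Aux in
/-- Paper's Theorem 1: if the density `f` of the squared channel gain satisfies
`f(α) = c·α^t + o(α^t)` as `α → 0⁺`, then the average symbol error probability
`P_e(s) = ∫_0^∞ Q(√(kαs))·f(α) dα` satisfies
`lim_{s→∞} s^{t+1}·P_e(s) = 2^t·c·Γ(t+3/2)/(√π·(t+1)·k^{t+1})`,
i.e., the diversity gain is `t + 1`. -/
theorem stmt13 (t k c : ℝ) (ht : -1 < t) (hk : 0 < k) (hc : 0 < c)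
    (f : ℝ → ℝ) (hmeas : Measurable f) (hnonneg : ∀ α, 0 ≤ f α)
    (hInt : MeasureTheory.IntegrableOn f (Set.Ioi 0))
    (hprob : ∫ α in Set.Ioi (0 : ℝ), f α = 1)
    (hf : Filter.Tendsto (fun α => f α / α ^ t) (nhdsWithin 0 (Set.Ioi 0)) (nhds c)) :
    Filter.Tendsto
      (fun s => s ^ (t + 1) * ∫ α in Set.Ioi (0 : ℝ), Qfun (Real.sqrt (k * α * s)) * f α)
      Filter.atTop
      (nhds (2 ^ t * c * Real.Gamma (t + 3 / 2) /
        (Real.sqrt Real.pi * (t + 1) * k ^ (t + 1)))) := by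
  have ht1 : (0:ℝ) < t + 1 := by linarith
  have ht2 : (-1:ℝ) < 2*t+2 := by linarith
  have hkt : (0:ℝ) < k ^ (t+1) := Real.rpow_pos_of_pos hk _
  have hGmono : Monotone (G f) := G_mono hnonneg hInt
  have hGmeas : Measurable (G f) := hGmono.measurable
  have hG := cdf_tendsto t c ht f hInt hf
  obtain ⟨δ, hδ0, hδ⟩ := Metric.tendsto_nhdsWithin_nhds.mp hG 1 one_pos
  set M : ℝ := c/(t+1) + 1 with hMdef
  have hMpos : 0 < M := by positivity
  have hGbd : ∀ b, 0 < b → b < δ → G f b ≤ M * b ^ (t+1) := by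
    intro b hb1 hb2
    have h := hδ (show b ∈ Ioi (0:ℝ) from hb1)
      (by rw [Real.dist_eq, sub_zero, abs_of_pos hb1]; exact hb2)
    rw [Real.dist_eq] at h
    have hbp : (0:ℝ) < b^(t+1) := Real.rpow_pos_of_pos hb1 _
    have h2 : G f b / b^(t+1) ≤ M := by
      have h3 := abs_lt.mp h
      rw [hMdef]; linarith [h3.2]
    calc G f b = (G f b / b^(t+1)) * b^(t+1) := by field_simp
      _ ≤ M * b^(t+1) := mul_le_mul_of_nonneg_right h2 hbp.le
  set C : ℝ := (M + (1/δ)^(t+1)) / k^(t+1) with hCdef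
  have hdinv : (0:ℝ) < (1/δ)^(t+1) := Real.rpow_pos_of_pos (by positivity) _
  have hsq : ∀ x : ℝ, 0 < x → ((x^2 : ℝ))^(t+1) = x^(2*t+2) := by
    intro x hx
    rw [← Real.rpow_natCast x 2, ← Real.rpow_mul hx.le]
    congr 1
    push_cast
    ring
  have hA1 : ∀ x : ℝ, 0 < x → (x^2/k)^(t+1) = x^(2*t+2)/k^(t+1) := by
    intro x hx
    rw [Real.div_rpow (sq_nonneg x) hk.le, hsq x hx]
  -- bound integrability
  have hbound_int : Integrable (fun x => phi x * (C * x ^ (2*t+2)))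
      (volume.restrict (Ioi 0)) := by
    have h0 := (integrable_rpow_mul_exp_neg_mul_sq
      (by norm_num : (0:ℝ) < 1/2) ht2).restrict (s := Ioi 0)
    have h1 := h0.const_mul (C / Real.sqrt (2*Real.pi))
    refine h1.congr (Eventually.of_forall fun x => ?_)
    unfold phi
    simp only
    rw [show -(1/2:ℝ)*x^2 = -x^2/2 by ring]
    ring
  -- DCT
  have hDCT : Tendsto (fun s => ∫ x in Ioi (0:ℝ), phi x * (s^(t+1) * G f (x^2/(k*s))))
      atTop (nhds (∫ x in Ioi (0:ℝ), phi x * (x^(2*t+2)/k^(t+1) * (c/(t+1))))) := by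
    refine tendsto_integral_filter_of_dominated_convergence
      (fun x => phi x * (C * x^(2*t+2))) ?_ ?_ hbound_int ?_
    · exact Eventually.of_forall fun s =>
        (phi_meas.mul ((hGmeas.comp (by fun_prop : Measurable fun x : ℝ =>
          x^2/(k*s))).const_mul _)).aestronglyMeasurable
    · filter_upwards [eventually_ge_atTop (1:ℝ)] with s hs
      refine (ae_restrict_iff' measurableSet_Ioi).mpr (Eventually.of_forall fun x hx => ?_)
      have hx0 : (0:ℝ) < x := hx
      have hs0 : (0:ℝ) < s := lt_of_lt_of_le one_pos hs
      have hspow : (0:ℝ) < s^(t+1) := Real.rpow_pos_of_pos hs0 _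
      have hβ0 : 0 < x^2/(k*s) := by positivity
      have hGβ : 0 ≤ G f (x^2/(k*s)) := G_nonneg hnonneg _
      have hxp : (0:ℝ) < x^(2*t+2) := Real.rpow_pos_of_pos hx0 _
      rw [Real.norm_eq_abs, abs_of_nonneg
        (mul_nonneg (phi_nonneg x) (mul_nonneg hspow.le hGβ))]
      refine mul_le_mul_of_nonneg_left ?_ (phi_nonneg x)
      have hβpow : (x^2/(k*s))^(t+1) = (x^2/k)^(t+1) / s^(t+1) := by
        rw [show x^2/(k*s) = (x^2/k)/s by rw [div_div]]
        exact Real.div_rpow (by positivity) hs0.le _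
      by_cases hcase : x^2/(k*s) < δ
      · have h1 : G f (x^2/(k*s)) ≤ M * (x^2/(k*s))^(t+1) := hGbd _ hβ0 hcase
        calc s^(t+1) * G f (x^2/(k*s))
            ≤ s^(t+1) * (M * (x^2/(k*s))^(t+1)) :=
              mul_le_mul_of_nonneg_left h1 hspow.le
          _ = M * (x^2/k)^(t+1) := by
              rw [hβpow]
              field_simp
          _ ≤ C * x^(2*t+2) := by
              rw [hA1 x hx0, hCdef,
                show (M + (1/δ)^(t+1)) / k^(t+1) * x^(2*t+2)
                  = (M + (1/δ)^(t+1)) * (x^(2*t+2)/k^(t+1)) by ring]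
              exact mul_le_mul_of_nonneg_right (le_add_of_nonneg_right hdinv.le)
                (by positivity)
      · have hδβ : δ ≤ x^2/(k*s) := not_lt.mp hcase
        have hsle : s ≤ (x^2/k) / δ := by
          rw [le_div_iff₀ hδ0]
          rw [le_div_iff₀ (by positivity : (0:ℝ) < k*s)] at hδβ
          rw [le_div_iff₀ hk]
          nlinarith
        have h2 : s^(t+1) ≤ ((x^2/k)/δ)^(t+1) :=
          Real.rpow_le_rpow hs0.le hsle ht1.le
        have h3 : ((x^2/k)/δ)^(t+1) = (x^2/k)^(t+1) * (1/δ)^(t+1) := by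
          rw [Real.div_rpow (by positivity) hδ0.le,
            Real.div_rpow (by norm_num : (0:ℝ) ≤ 1) hδ0.le, Real.one_rpow]
          ring
        calc s^(t+1) * G f (x^2/(k*s))
            ≤ s^(t+1) * 1 :=
              mul_le_mul_of_nonneg_left (G_le_one hnonneg hInt hprob _) hspow.le
          _ = s^(t+1) := mul_one _
          _ ≤ (x^2/k)^(t+1) * (1/δ)^(t+1) := h3 ▸ h2
          _ ≤ C * x^(2*t+2) := by
              rw [hA1 x hx0, hCdef,
                show x^(2*t+2)/k^(t+1) * (1/δ)^(t+1)
                  = (1/δ)^(t+1) * (x^(2*t+2)/k^(t+1)) by ring,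
                show (M + (1/δ)^(t+1)) / k^(t+1) * x^(2*t+2)
                  = (M + (1/δ)^(t+1)) * (x^(2*t+2)/k^(t+1)) by ring]
              exact mul_le_mul_of_nonneg_right (le_add_of_nonneg_left hMpos.le)
                (by positivity)
    · refine (ae_restrict_iff' measurableSet_Ioi).mpr (Eventually.of_forall fun x hx => ?_)
      have hx0 : (0:ℝ) < x := hx
      have hβt : Tendsto (fun s : ℝ => x^2/(k*s)) atTop (nhdsWithin 0 (Ioi 0)) := by
        rw [tendsto_nhdsWithin_iff]
        constructor
        · exact Tendsto.div_atTop tendsto_const_nhds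
            (Tendsto.const_mul_atTop hk tendsto_id)
        · filter_upwards [eventually_gt_atTop (0:ℝ)] with s hs
          exact mem_Ioi.mpr (by positivity)
      have hcomp : Tendsto (fun s : ℝ => G f (x^2/(k*s)) / (x^2/(k*s))^(t+1))
          atTop (nhds (c/(t+1))) := hG.comp hβt
      have hlim : Tendsto (fun s : ℝ =>
          phi x * ((x^2/k)^(t+1) * (G f (x^2/(k*s)) / (x^2/(k*s))^(t+1))))
          atTop (nhds (phi x * ((x^2/k)^(t+1) * (c/(t+1))))) :=
        (hcomp.const_mul _).const_mul _
      rw [hA1 x hx0] at hlim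
      refine hlim.congr' ?_
      filter_upwards [eventually_gt_atTop (0:ℝ)] with s hs
      have hspow : (0:ℝ) < s^(t+1) := Real.rpow_pos_of_pos hs _
      have hAp : (0:ℝ) < x^(2*t+2)/k^(t+1) := by
        have := Real.rpow_pos_of_pos hx0 (2*t+2); positivity
      have hβpow : (x^2/(k*s))^(t+1) = (x^2/k)^(t+1) / s^(t+1) := by
        rw [show x^2/(k*s) = (x^2/k)/s by rw [div_div]]
        exact Real.div_rpow (by positivity) hs.le _
      have hne1 : k^(t+1) ≠ 0 := hkt.ne'
      have hne2 : s^(t+1) ≠ 0 := hspow.ne'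
      have hne3 : x^(2*t+2) ≠ 0 := (Real.rpow_pos_of_pos hx0 (2*t+2)).ne'
      rw [hβpow, hA1 x hx0]
      field_simp
  -- value of the limit integral
  have hsqrt2 : (0:ℝ) < Real.sqrt 2 := Real.sqrt_pos.mpr (by norm_num)
  have hsqrtpi : (0:ℝ) < Real.sqrt Real.pi := Real.sqrt_pos.mpr Real.pi_pos
  have hval : ∫ x in Ioi (0:ℝ), phi x * (x^(2*t+2)/k^(t+1) * (c/(t+1)))
      = 2^t * c * Real.Gamma (t+3/2) / (Real.sqrt Real.pi * (t+1) * k^(t+1)) := by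
    have key : ∫ x in Ioi (0:ℝ), x ^ (2*t+2) * Real.exp (-(1/2) * x ^ (2:ℝ))
        = (1/2:ℝ) ^ (-(2*t+2+1)/2) * (1/(2:ℝ)) * Real.Gamma ((2*t+2+1)/2) := by
      have := integral_rpow_mul_exp_neg_mul_rpow
        (by norm_num : (0:ℝ) < 2) ht2 (by norm_num : (0:ℝ) < 1/2)
      convert this using 2
    have congr1 : ∫ x in Ioi (0:ℝ), phi x * (x^(2*t+2)/k^(t+1) * (c/(t+1)))
        = (c/((t+1) * k^(t+1) * Real.sqrt (2*Real.pi))) *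
          ∫ x in Ioi (0:ℝ), x ^ (2*t+2) * Real.exp (-(1/2) * x ^ (2:ℝ)) := by
      rw [← integral_const_mul]
      refine setIntegral_congr_fun measurableSet_Ioi fun x hx => ?_
      have hx0 : (0:ℝ) < x := hx
      have h2 : x ^ (2:ℝ) = x ^ 2 := by
        rw [show (2:ℝ) = ((2:ℕ):ℝ) by norm_num, Real.rpow_natCast]
      have hsp : (0:ℝ) < Real.sqrt (2*Real.pi) :=
        Real.sqrt_pos.mpr (by positivity)
      rw [h2, show -(1/2:ℝ)*x^2 = -x^2/2 by ring]
      unfold phi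
      field_simp
    rw [congr1, key]
    rw [show ((2*t+2+1)/2 : ℝ) = t+3/2 by ring]
    have e1 : (1/2:ℝ)^(-(2*t+2+1)/2) * (1/(2:ℝ)) = 2^t * Real.sqrt 2 := by
      rw [show (-(2*t+2+1)/2 : ℝ) = -(t+3/2) by ring]
      rw [one_div, Real.inv_rpow (by norm_num : (0:ℝ) ≤ 2),
        Real.rpow_neg (by norm_num : (0:ℝ) ≤ 2), inv_inv]
      rw [show (t+3/2 : ℝ) = t + 1/2 + 1 by ring,
        Real.rpow_add two_pos, Real.rpow_add two_pos, Real.rpow_one,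
        ← Real.sqrt_eq_rpow]
      ring
    rw [show (-(2*t+2+1)/2 : ℝ) = -(t+3/2) by ring] at e1 ⊢
    rw [show Real.sqrt (2*Real.pi) = Real.sqrt 2 * Real.sqrt Real.pi from
      Real.sqrt_mul (by norm_num) _]
    rw [show ((1/2:ℝ)^(-(t+3/2)) * (1/(2:ℝ)) * Real.Gamma (t+3/2)) =
      ((1/2:ℝ)^(-(t+3/2)) * (1/(2:ℝ))) * Real.Gamma (t+3/2) by ring, e1]
    field_simp
  have hfinal := hval ▸ hDCT
  refine Tendsto.congr' ?_ hfinal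
  filter_upwards [eventually_gt_atTop (0:ℝ)] with s hs
  rw [fubini k s hk hs f hmeas hnonneg hInt, ← integral_const_mul]
  refine setIntegral_congr_fun measurableSet_Ioi fun x hx => ?_
  ring
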